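/- Define g: [0,1] → [0,1] by g(x) := min{2x, 2 − 2x}, and define recursively g_1 := g and g_{s+1} := g ∘ g_s on [0,1] for s ∈ ℕ. Then for every x ∈ [0,1] the series Σ_{s=1}^∞ g_s(x)/2^{2s} converges and x² = x − Σ_{s=1}^∞ g_s(x)/2^{2s}. -/
import Mathlib


/-- the hat function `g(x) = min{2x, 2 − 2x}` -/
noncomputable def hatFun : ℝ → ℝ := fun x => min (2 * x) (2 - 2 * x)

lemma hatFun_mem {y : ℝ} (hy : y ∈ Set.Icc (0 : ℝ) 1) :
    hatFun y ∈ Set.Icc (0 : ℝ) 1 := by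
  obtain ⟨h0, h1⟩ := hy
  unfold hatFun
  rcases le_total (2 * y) (2 - 2 * y) with h | h <;>
    simp [min_eq_left, min_eq_right, h] <;> constructor <;> linarith

lemma hatFun_iter_mem {x : ℝ} (hx : x ∈ Set.Icc (0 : ℝ) 1) (n : ℕ) :
    hatFun^[n] x ∈ Set.Icc (0 : ℝ) 1 := by
  induction n with
  | zero => simpa using hx
  | succ n ih =>
      rw [Function.iterate_succ_apply']
      exact hatFun_mem ih

lemma hatFun_key (y : ℝ) :
    y - y ^ 2 = hatFun y / 4 + (hatFun y - (hatFun y) ^ 2) / 4 := by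
  unfold hatFun
  rcases le_total (2 * y) (2 - 2 * y) with h | h
  · rw [min_eq_left h]; ring
  · rw [min_eq_right h]; ring

lemma partial_sum {x : ℝ} (n : ℕ) :
    ∑ s ∈ Finset.range n, hatFun^[s + 1] x / 4 ^ (s + 1)
      = (x - x ^ 2) - (hatFun^[n] x - (hatFun^[n] x) ^ 2) / 4 ^ n := by
  induction n with
  | zero => simp
  | succ n ih =>
      rw [Finset.sum_range_succ, ih]
      have h := hatFun_key (hatFun^[n] x)
      rw [Function.iterate_succ_apply', h]
      have h4 : (4 : ℝ) ^ (n + 1) = 4 ^ n * 4 := by ring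
      rw [h4]
      have hne : (4 : ℝ) ^ n ≠ 0 := by positivity
      field_simp
      ring

/-- Yarotsky's sawtooth representation of the square
function.  With `g_s := g ∘ ⋯ ∘ g` the `s`-fold composition of the hat
function `g`, for every `x ∈ [0,1]` the series `Σ_{s=1}^∞ g_s(x)/2^{2s}`
converges and `x² = x − Σ_{s=1}^∞ g_s(x)/2^{2s}`. -/
theorem square_sawtooth (x : ℝ) (hx : x ∈ Set.Icc (0 : ℝ) 1) :
    Summable (fun s : ℕ => hatFun^[s + 1] x / 2 ^ (2 * (s + 1))) ∧
    x ^ 2 = x - ∑' s : ℕ, hatFun^[s + 1] x / 2 ^ (2 * (s + 1)) := by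
  have hpow : ∀ s : ℕ, (2 : ℝ) ^ (2 * (s + 1)) = 4 ^ (s + 1) := by
    intro s
    rw [pow_mul]; norm_num
  have hfun : (fun s : ℕ => hatFun^[s + 1] x / 2 ^ (2 * (s + 1)))
      = fun s : ℕ => hatFun^[s + 1] x / 4 ^ (s + 1) := by
    funext s; rw [hpow]
  -- summability by comparison with geometric series
  have hsum : Summable (fun s : ℕ => hatFun^[s + 1] x / 4 ^ (s + 1)) := by
    apply Summable.of_norm
    have hgeo : Summable (fun s : ℕ => (1 / 4 : ℝ) ^ (s + 1)) :=
      (summable_geometric_of_lt_one (by norm_num) (by norm_num)).comp_injective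
        (add_left_injective 1)
    refine Summable.of_nonneg_of_le (fun s => norm_nonneg _) (fun s => ?_) hgeo
    · 
      have hm := hatFun_iter_mem hx (s + 1)
      rw [Real.norm_eq_abs, abs_div, abs_of_nonneg hm.1,
        abs_of_nonneg (by positivity : (0:ℝ) ≤ 4 ^ (s + 1))]
      rw [div_pow, one_pow, div_le_div_iff₀ (by positivity) (by positivity)]
      nlinarith [hm.2, pow_pos (show (0:ℝ) < 4 by norm_num) (s + 1)]
  have htends : Filter.Tendsto
      (fun n => ∑ s ∈ Finset.range n, hatFun^[s + 1] x / 4 ^ (s + 1))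
      Filter.atTop (nhds (x - x ^ 2)) := by
    have h1 : Filter.Tendsto
        (fun n : ℕ => (hatFun^[n] x - (hatFun^[n] x) ^ 2) / 4 ^ n)
        Filter.atTop (nhds 0) := by
      apply squeeze_zero_norm (a := fun n : ℕ => (1 / 4 : ℝ) ^ n)
      · intro n
        have hm := hatFun_iter_mem hx n
        rw [Real.norm_eq_abs, abs_div,
          abs_of_nonneg (by positivity : (0:ℝ) ≤ 4 ^ n), div_pow, one_pow,
          div_le_div_iff₀ (by positivity) (by positivity), one_mul]
        have hb : |hatFun^[n] x - hatFun^[n] x ^ 2| ≤ 1 :=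
          abs_le.mpr ⟨by nlinarith [hm.1, hm.2], by nlinarith [hm.1, hm.2]⟩
        nlinarith [pow_pos (show (0:ℝ) < 4 by norm_num) n, abs_nonneg (hatFun^[n] x - hatFun^[n] x ^ 2)]
      · exact tendsto_pow_atTop_nhds_zero_of_lt_one (by norm_num) (by norm_num)
    have := Filter.Tendsto.const_sub (x - x ^ 2) h1
    simpa only [partial_sum, sub_zero] using this
  have hhs : HasSum (fun s : ℕ => hatFun^[s + 1] x / 4 ^ (s + 1)) (x - x ^ 2) :=
    hsum.hasSum_iff_tendsto_nat.mpr htends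
  constructor
  · rw [hfun]; exact hsum
  · rw [hfun, hhs.tsum_eq]; ring
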